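/- (Remak) If z₁, …, z_n are non-zero complex numbers arranged so that |z₁| ≤ |z₂| ≤ ⋯ ≤ |z_n|, then ∏_{1 ≤ i < j ≤ n} |1 − z_i/z_j|² ≤ nⁿ. -/

import Mathlib

open Finset Matrix
open scoped ComplexOrder

lemma sq_abs_eq_star_mul (w : ℂ) : ((‖w‖ ^ 2 : ℝ) : ℂ) = star w * w := by
  rw [← Complex.normSq_eq_norm_sq, Complex.star_def, mul_comm, Complex.mul_conj]

lemma hadamard_aux {n : ℕ} (hn : 0 < n) (B : Matrix (Fin n) (Fin n) ℂ)
    (h : ∑ i, ∑ j, ‖B i j‖ ^ 2 ≤ (n : ℝ)) :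
    ‖B.det‖ ^ 2 ≤ 1 := by
  have hn' : (n : ℝ) ≠ 0 := Nat.cast_ne_zero.mpr hn.ne'
  set H := Bᴴ * B with hHdef
  have hps : H.PosSemidef := Matrix.posSemidef_conjTranspose_mul_self B
  have hH : H.IsHermitian := hps.1
  set μ := hH.eigenvalues with hμdef
  have hμ0 : ∀ i, 0 ≤ μ i := hps.eigenvalues_nonneg
  -- determinant identity
  have hdet : ‖B.det‖ ^ 2 = ∏ i, μ i := by
    have h1 : H.det = ∏ i, (μ i : ℂ) := hH.det_eq_prod_eigenvalues
    have h2 : H.det = star B.det * B.det := by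
      rw [hHdef, Matrix.det_mul, Matrix.det_conjTranspose]
    have h3 : ((‖B.det‖ ^ 2 : ℝ) : ℂ) = ((∏ i, μ i : ℝ) : ℂ) := by
      rw [sq_abs_eq_star_mul, ← h2, h1, Complex.ofReal_prod]
    exact_mod_cast h3
  -- trace identity
  have htr : ∑ i, μ i = ∑ i, ∑ j, ‖B i j‖ ^ 2 := by
    have t1 : H.trace = ∑ i, (μ i : ℂ) := by
      exact hH.trace_eq_sum_eigenvalues
    have t2 : H.trace = ∑ j, ∑ i, ((‖B i j‖ ^ 2 : ℝ) : ℂ) := by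
      rw [hHdef]
      simp only [Matrix.trace, Matrix.diag, Matrix.mul_apply, Matrix.conjTranspose_apply]
      refine Finset.sum_congr rfl fun j _ => Finset.sum_congr rfl fun i _ => ?_
      rw [sq_abs_eq_star_mul]
    have t3 : ((∑ i, μ i : ℝ) : ℂ) = ((∑ j, ∑ i, ‖B i j‖ ^ 2 : ℝ) : ℂ) := by
      rw [Complex.ofReal_sum, ← t1, t2]
      push_cast
      rfl
    rw [Finset.sum_comm (γ := Fin n)] at t3
    exact_mod_cast t3
  -- AM-GM
  have amgm := Real.geom_mean_le_arith_mean_weighted univ (fun _ => (n : ℝ)⁻¹) μ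
    (fun i _ => by positivity) (by simp [Finset.sum_const]; field_simp) (fun i _ => hμ0 i)
  have hmean : ∑ i, (n : ℝ)⁻¹ * μ i ≤ 1 := by
    rw [← Finset.mul_sum, htr]
    calc (n : ℝ)⁻¹ * (∑ i, ∑ j, ‖B i j‖ ^ 2) ≤ (n : ℝ)⁻¹ * n :=
      mul_le_mul_of_nonneg_left h (by positivity)
    _ = 1 := inv_mul_cancel₀ hn'
  have h1 : ∏ i, μ i ^ ((n : ℝ)⁻¹) ≤ 1 := le_trans amgm hmean
  have h2 : ∏ i, μ i = (∏ i, μ i ^ ((n : ℝ)⁻¹)) ^ (n : ℕ) := by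
    rw [← Finset.prod_pow]
    refine Finset.prod_congr rfl fun i _ => ?_
    rw [← Real.rpow_natCast (μ i ^ ((n : ℝ)⁻¹)) n, ← Real.rpow_mul (hμ0 i),
      inv_mul_cancel₀ hn', Real.rpow_one]
  rw [hdet, h2]
  exact pow_le_one₀ (Finset.prod_nonneg fun i _ => Real.rpow_nonneg (hμ0 i) _) h1

lemma remak_key {n : ℕ} (r : Fin n → ℝ) (hr : ∀ i, 0 < r i)
    (hmono : ∀ i j : Fin n, i ≤ j → r i ≤ r j) (i j : Fin n) :
    r i ^ (j : ℕ) * ∏ l ∈ Iio i, r l ≤ r i ^ (i : ℕ) * ∏ l ∈ Iio j, r l := by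
  rcases le_total j i with hji | hij
  · have hji' : (j : ℕ) ≤ (i : ℕ) := hji
    have hsub : Iio j ⊆ Iio i := Finset.Iio_subset_Iio hji
    have hcard : (Iio i \ Iio j).card = (i : ℕ) - (j : ℕ) := by
      rw [Finset.card_sdiff_of_subset hsub, Fin.card_Iio, Fin.card_Iio]
    have hb : ∏ l ∈ Iio i \ Iio j, r l ≤ r i ^ ((i : ℕ) - (j : ℕ)) := by
      calc ∏ l ∈ Iio i \ Iio j, r l ≤ ∏ _l ∈ Iio i \ Iio j, r i :=
            Finset.prod_le_prod (fun l _ => (hr l).le)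
              (fun l hl => hmono l i
                (le_of_lt (Finset.mem_Iio.mp (Finset.mem_sdiff.mp hl).1)))
        _ = r i ^ ((i : ℕ) - (j : ℕ)) := by rw [Finset.prod_const, hcard]
    calc r i ^ (j : ℕ) * ∏ l ∈ Iio i, r l
        = r i ^ (j : ℕ) * ((∏ l ∈ Iio i \ Iio j, r l) * ∏ l ∈ Iio j, r l) := by
          rw [Finset.prod_sdiff hsub]
      _ ≤ r i ^ (j : ℕ) * (r i ^ ((i : ℕ) - (j : ℕ)) * ∏ l ∈ Iio j, r l) := by
          have h0 : (0:ℝ) ≤ ∏ l ∈ Iio j, r l := Finset.prod_nonneg fun l _ => (hr l).le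
          have := mul_le_mul_of_nonneg_right hb h0
          exact mul_le_mul_of_nonneg_left this (pow_nonneg (hr i).le _)
      _ = r i ^ (i : ℕ) * ∏ l ∈ Iio j, r l := by
          rw [← mul_assoc, ← pow_add, Nat.add_sub_cancel' hji']
  · have hij' : (i : ℕ) ≤ (j : ℕ) := hij
    have hsub : Iio i ⊆ Iio j := Finset.Iio_subset_Iio hij
    have hcard : (Iio j \ Iio i).card = (j : ℕ) - (i : ℕ) := by
      rw [Finset.card_sdiff_of_subset hsub, Fin.card_Iio, Fin.card_Iio]
    have hb : r i ^ ((j : ℕ) - (i : ℕ)) ≤ ∏ l ∈ Iio j \ Iio i, r l := by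
      calc r i ^ ((j : ℕ) - (i : ℕ)) = ∏ _l ∈ Iio j \ Iio i, r i := by
            rw [Finset.prod_const, hcard]
        _ ≤ ∏ l ∈ Iio j \ Iio i, r l :=
            Finset.prod_le_prod (fun l _ => (hr i).le)
              (fun l hl => hmono i l
                (le_of_not_gt fun hli =>
                  (Finset.mem_sdiff.mp hl).2 (Finset.mem_Iio.mpr hli)))
    calc r i ^ (j : ℕ) * ∏ l ∈ Iio i, r l
        = r i ^ (i : ℕ) * (r i ^ ((j : ℕ) - (i : ℕ)) * ∏ l ∈ Iio i, r l) := by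
          rw [← mul_assoc, ← pow_add, Nat.add_sub_cancel' hij']
      _ ≤ r i ^ (i : ℕ) * ((∏ l ∈ Iio j \ Iio i, r l) * ∏ l ∈ Iio i, r l) := by
          have h0 : (0:ℝ) ≤ ∏ l ∈ Iio i, r l := Finset.prod_nonneg fun l _ => (hr l).le
          have := mul_le_mul_of_nonneg_right hb h0
          exact mul_le_mul_of_nonneg_left this (pow_nonneg (hr i).le _)
      _ = r i ^ (i : ℕ) * ∏ l ∈ Iio j, r l := by rw [Finset.prod_sdiff hsub]

/-- **Remak's inequality** for complex numbers: if `z₁,…,zₙ` are nonzero complex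
numbers with `|z₁| ≤ ⋯ ≤ |zₙ|`, then `∏_{i<j} |1 − zᵢ/zⱼ|² ≤ nⁿ`. -/
theorem remak_prod_bound (n : ℕ) (z : Fin n → ℂ)
    (hz : ∀ i, z i ≠ 0)
    (hmono : ∀ i j : Fin n, i ≤ j → ‖z i‖ ≤ ‖z j‖) :
    (∏ p ∈ Finset.univ.filter (fun p : Fin n × Fin n => p.1 < p.2),
      ‖1 - z p.1 / z p.2‖ ^ 2) ≤ (n : ℝ) ^ n := by
  rcases Nat.eq_zero_or_pos n with hn | hn
  · subst hn
    simp [Finset.filter_eq_empty_iff]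
  have hn' : (n : ℝ) ≠ 0 := Nat.cast_ne_zero.mpr hn.ne'
  set r : Fin n → ℝ := fun i => ‖z i‖ with hrdef
  have hr : ∀ i, 0 < r i := fun i => norm_pos_iff.mpr (hz i)
  have hP : ∀ i : Fin n, 0 < ∏ l ∈ Iio i, r l := fun i => Finset.prod_pos fun l _ => hr l
  set c : Fin n → ℝ := fun i => (∏ l ∈ Iio i, r l)⁻¹ with hcdef
  have hc : ∀ i, 0 < c i := fun i => inv_pos.mpr (hP i)
  have hsn : (0:ℝ) < Real.sqrt n := Real.sqrt_pos.mpr (by exact_mod_cast hn)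
  set d : Fin n → ℝ := fun i => (Real.sqrt n * c i * r i ^ (i : ℕ))⁻¹ with hddef
  have hd : ∀ i, 0 < d i := fun i => inv_pos.mpr (mul_pos (mul_pos hsn (hc i)) (pow_pos (hr i) _))
  set B : Matrix (Fin n) (Fin n) ℂ :=
    Matrix.of (fun i j => ((d i * c j : ℝ) : ℂ) * z i ^ (j : ℕ)) with hBdef
  -- key inequality in `c`-form
  have hkey : ∀ i j : Fin n, c j * r i ^ (j : ℕ) ≤ c i * r i ^ (i : ℕ) := by
    intro i j
    have h1 := remak_key r hr hmono i j
    have h2 : r i ^ (j : ℕ) / (∏ l ∈ Iio j, r l) ≤ r i ^ (i : ℕ) / (∏ l ∈ Iio i, r l) :=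
      (div_le_div_iff₀ (hP j) (hP i)).mpr h1
    simpa [hcdef, div_eq_mul_inv, mul_comm] using h2
  -- entrywise bound
  have hentry : ∀ i j, ‖B i j‖ ^ 2 ≤ (n : ℝ)⁻¹ := by
    intro i j
    have habs : ‖B i j‖ = d i * c j * r i ^ (j : ℕ) := by
      rw [hBdef]
      simp only [Matrix.of_apply, norm_mul, norm_pow, Complex.norm_real, Real.norm_eq_abs]
      rw [abs_of_pos (hd i), abs_of_pos (hc j)]
    rw [habs]
    have hle : d i * c j * r i ^ (j : ℕ) ≤ (Real.sqrt n)⁻¹ := by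
      calc d i * c j * r i ^ (j : ℕ) = d i * (c j * r i ^ (j : ℕ)) := by ring
        _ ≤ d i * (c i * r i ^ (i : ℕ)) :=
            mul_le_mul_of_nonneg_left (hkey i j) (hd i).le
        _ = (Real.sqrt n)⁻¹ := by
            rw [hddef]
            have h1 : c i ≠ 0 := (hc i).ne'
            have h2 : r i ^ (i : ℕ) ≠ 0 := (pow_pos (hr i) _).ne'
            field_simp
    calc (d i * c j * r i ^ (j : ℕ)) ^ 2 ≤ ((Real.sqrt n)⁻¹) ^ 2 :=
        pow_le_pow_left₀ (mul_nonneg (mul_nonneg (hd i).le (hc j).le) (pow_nonneg (hr i).le _)) hle 2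
      _ = (n : ℝ)⁻¹ := by
        rw [inv_pow, Real.sq_sqrt (Nat.cast_nonneg n)]
  have hsum : ∑ i, ∑ j, ‖B i j‖ ^ 2 ≤ (n : ℝ) := by
    calc ∑ i, ∑ j, ‖B i j‖ ^ 2
        ≤ ∑ _i : Fin n, ∑ _j : Fin n, (n : ℝ)⁻¹ :=
          Finset.sum_le_sum fun i _ => Finset.sum_le_sum fun j _ => hentry i j
      _ = (n : ℝ) * ((n : ℝ) * (n : ℝ)⁻¹) := by
          simp [Finset.sum_const, Finset.card_univ, mul_assoc]
      _ = (n : ℝ) := by rw [mul_inv_cancel₀ hn', mul_one]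
  have hB2 := hadamard_aux hn B hsum
  -- factor the determinant
  have hBfact : B = Matrix.diagonal (fun i => ((d i : ℝ) : ℂ)) * Matrix.vandermonde z *
      Matrix.diagonal (fun j => ((c j : ℝ) : ℂ)) := by
    ext i j
    rw [Matrix.mul_diagonal, Matrix.diagonal_mul, hBdef]
    simp only [Matrix.of_apply, Matrix.vandermonde_apply]
    push_cast
    ring
  have hdetB : ‖B.det‖ =
      ((∏ i, d i) * ∏ i, c i) * ‖(Matrix.vandermonde z).det‖ := by
    rw [hBfact, Matrix.det_mul, Matrix.det_mul, Matrix.det_diagonal, Matrix.det_diagonal,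
      norm_mul, norm_mul, norm_prod, norm_prod]
    simp only [Complex.norm_real, Real.norm_eq_abs]
    rw [Finset.prod_congr rfl (fun i _ => abs_of_pos (hd i)),
      Finset.prod_congr rfl (fun i _ => abs_of_pos (hc i))]
    ring
  set A := ‖(Matrix.vandermonde z).det‖ with hAdef
  set Q := ∏ i, (Real.sqrt n * r i ^ (i : ℕ)) with hQdef
  have hQpos : 0 < Q := Finset.prod_pos fun i _ => mul_pos hsn (pow_pos (hr i) _)
  have hK : (∏ i, d i) * ∏ i, c i = Q⁻¹ := by
    rw [hQdef, ← Finset.prod_mul_distrib, ← Finset.prod_inv_distrib]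
    refine Finset.prod_congr rfl fun i _ => ?_
    rw [hddef]
    have h1 : c i ≠ 0 := (hc i).ne'
    have h2 : r i ^ (i : ℕ) ≠ 0 := (pow_pos (hr i) _).ne'
    have h3 : Real.sqrt n ≠ 0 := hsn.ne'
    field_simp
  have hV : A ^ 2 ≤ (n : ℝ) ^ n * ∏ i, (r i ^ 2) ^ (i : ℕ) := by
    have h1 : (Q⁻¹ * A) ^ 2 ≤ 1 := by rw [← hK, ← hdetB]; exact hB2
    have h2 : A ^ 2 ≤ Q ^ 2 := by
      have hQ0 : Q ≠ 0 := hQpos.ne'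
      have hA2 : A ^ 2 = (Q⁻¹ * A) ^ 2 * Q ^ 2 := by
        field_simp
      rw [hA2]
      calc (Q⁻¹ * A) ^ 2 * Q ^ 2 ≤ 1 * Q ^ 2 :=
          mul_le_mul_of_nonneg_right h1 (sq_nonneg Q)
        _ = Q ^ 2 := one_mul _
    calc A ^ 2 ≤ Q ^ 2 := h2
      _ = ∏ i, (Real.sqrt n * r i ^ (i : ℕ)) ^ 2 := by rw [hQdef, ← Finset.prod_pow]
      _ = ∏ i, ((n : ℝ) * (r i ^ 2) ^ (i : ℕ)) := by
          refine Finset.prod_congr rfl fun i _ => ?_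
          rw [mul_pow, Real.sq_sqrt (Nat.cast_nonneg n), ← pow_mul,
            mul_comm (i : ℕ) 2, pow_mul]
      _ = (n : ℝ) ^ n * ∏ i, (r i ^ 2) ^ (i : ℕ) := by
          rw [Finset.prod_mul_distrib, Finset.prod_const, Finset.card_univ, Fintype.card_fin]
  -- convert the pair product to a double product
  have hpair : (∏ p ∈ Finset.univ.filter (fun p : Fin n × Fin n => p.1 < p.2),
        ‖1 - z p.1 / z p.2‖ ^ 2)
      = ∏ i, ∏ j ∈ Ioi i, ‖1 - z i / z j‖ ^ 2 :=
    Finset.prod_finset_product' (f := fun i j => ‖1 - z i / z j‖ ^ 2) _ _ _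
      (fun p => by simp [Finset.mem_Ioi])
  have hfac : ∀ i j : Fin n, ‖1 - z i / z j‖ = ‖z j - z i‖ / r j := by
    intro i j
    rw [show (1 : ℂ) - z i / z j = (z j - z i) / z j by field_simp [hz j], norm_div]
  have hDpos : 0 < ∏ j, (r j ^ 2) ^ (j : ℕ) := Finset.prod_pos fun j _ => pow_pos (pow_pos (hr j) 2) _
  have habsV : A = ∏ i, ∏ j ∈ Ioi i, ‖z j - z i‖ := by
    rw [hAdef, Matrix.det_vandermonde, norm_prod]
    exact Finset.prod_congr rfl fun i _ => norm_prod _ _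
  have hDen : (∏ i : Fin n, ∏ j ∈ Ioi i, (r j ^ 2)) = ∏ j, (r j ^ 2) ^ (j : ℕ) := by
    rw [Finset.prod_comm' (t' := Finset.univ) (s' := fun y => Iio y)
      (fun x y => by simp [Finset.mem_Ioi, Finset.mem_Iio])]
    refine Finset.prod_congr rfl fun y _ => ?_
    rw [Finset.prod_const, Fin.card_Iio]
  have hmain : (∏ i, ∏ j ∈ Ioi i, ‖1 - z i / z j‖ ^ 2)
      = A ^ 2 / ∏ j, (r j ^ 2) ^ (j : ℕ) := by
    calc ∏ i, ∏ j ∈ Ioi i, ‖1 - z i / z j‖ ^ 2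
        = ∏ i, ∏ j ∈ Ioi i, (‖z j - z i‖ ^ 2 / (r j ^ 2)) := by
          refine Finset.prod_congr rfl fun i _ => Finset.prod_congr rfl fun j _ => ?_
          rw [hfac, div_pow]
      _ = (∏ i, ∏ j ∈ Ioi i, ‖z j - z i‖ ^ 2) /
            (∏ i : Fin n, ∏ j ∈ Ioi i, (r j ^ 2)) := by
          rw [← Finset.prod_div_distrib]
          exact Finset.prod_congr rfl fun i _ => Finset.prod_div_distrib _ _
      _ = A ^ 2 / ∏ j, (r j ^ 2) ^ (j : ℕ) := by
          rw [hDen]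
          congr 1
          rw [habsV, ← Finset.prod_pow]
          exact Finset.prod_congr rfl fun i _ => Finset.prod_pow _ _ _
  rw [hpair, hmain, div_le_iff₀ hDpos]
  exact hV
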